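/- If (X, F) is an (r; d)-CFF and F₀, F₁, ..., F_r are r+1 distinct blocks of F each satisfying: for all 0 ≤ i ≤ r and any i blocks G₁,...,G_i ∈ F distinct from the given block, |F_j \ (G₁ ∪ ... ∪ G_i)| > t(r-i) + d, then |F₀ ∪ F₁ ∪ ... ∪ F_r| ≥ t·r(r+1)/2 + (d+1)(r+1). -/

import Mathlib

open Finset

/-- A set system `F` on `X` is a `(w,r;d)`-cover-free family. -/
def IsCFF {X : Type} [Fintype X] [DecidableEq X] (w r d : ℕ) (F : Finset (Finset X)) : Prop :=
  ∀ WS RS : Finset (Finset X), WS ⊆ F → RS ⊆ F → WS.card = w → RS.card = r →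
    Disjoint WS RS → d < ((WS.inf id) \ (RS.sup id)).card

/-- If `F₀,…,F_r` are `r+1` distinct blocks of an `(r;d)`-CFF each satisfying
`|F_j \ (G₁ ∪ … ∪ G_i)| > t(r-i) + d` for any `i ≤ r` other blocks `G₁,…,G_i`,
then `|F₀ ∪ … ∪ F_r| ≥ t·r(r+1)/2 + (d+1)(r+1)`. -/
theorem cff_union_lower_bound {X : Type} [Fintype X] [DecidableEq X] (r d t : ℕ)
    (ht : 0 < t) (F : Finset (Finset X)) (hcff : IsCFF 1 r d F)
    (f : Fin (r + 1) → Finset X) (hinj : Function.Injective f)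
    (hmem : ∀ j, f j ∈ F)
    (hkey : ∀ j : Fin (r + 1), ∀ i ≤ r, ∀ S : Finset (Finset X),
      S ⊆ F.erase (f j) → S.card = i → t * (r - i) + d < (f j \ S.sup id).card) :
    t * r * (r + 1) / 2 + (d + 1) * (r + 1) ≤ (Finset.univ.sup f).card := by
  classical
  set f' : ℕ → Finset X := fun i => if h : i < r + 1 then f ⟨i, h⟩ else ∅ with hf'
  have hsup : Finset.univ.sup f = (Finset.range (r + 1)).sup f' := by
    apply le_antisymm
    · apply Finset.sup_le
      intro j _
      have : f j = f' (j : ℕ) := by simp only [hf', dif_pos j.2]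
      rw [this]
      exact Finset.le_sup (by simp [j.2])
    · apply Finset.sup_le
      intro i hi
      rw [Finset.mem_range] at hi
      have : f' i = f ⟨i, hi⟩ := by simp only [hf', dif_pos hi]
      rw [this]
      exact Finset.le_sup (Finset.mem_univ _)
  have main : ∀ k, k ≤ r + 1 →
      (∑ j ∈ Finset.range k, (t * (r - j) + (d + 1))) ≤ ((Finset.range k).sup f').card := by
    intro k hk
    induction k with
    | zero => simp
    | succ k ih =>
      have hkr : k ≤ r := by omega
      have ih' := ih (by omega)
      set S : Finset (Finset X) := (Finset.range k).image f' with hS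
      have hinj' : Set.InjOn f' (Finset.range (k + 1)) := by
        intro a ha b hb hab
        simp only [Finset.coe_range, Set.mem_Iio] at ha hb
        have ha' : a < r + 1 := by omega
        have hb' : b < r + 1 := by omega
        simp only [hf', dif_pos ha', dif_pos hb'] at hab
        simpa using congrArg Fin.val (hinj hab)
      have hcard : S.card = k := by
        rw [hS, Finset.card_image_of_injOn, Finset.card_range]
        exact hinj'.mono (by intro x hx; simp at hx ⊢; omega)
      have hfk : f' k = f ⟨k, by omega⟩ := dif_pos hk
      have hSsub : S ⊆ F.erase (f ⟨k, by omega⟩) := by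
        intro x hx
        rw [hS, Finset.mem_image] at hx
        obtain ⟨j, hj, rfl⟩ := hx
        rw [Finset.mem_range] at hj
        rw [Finset.mem_erase]
        constructor
        · intro h
          have : f' j = f ⟨k, by omega⟩ := h
          have hj' : j < r + 1 := by omega
          simp only [hf', dif_pos hj'] at this
          have := hinj this
          simp [Fin.ext_iff] at this
          omega
        · have hj' : j < r + 1 := by omega
          simp only [hf', dif_pos hj']
          exact hmem _
      have hkey' := hkey ⟨k, by omega⟩ k hkr S hSsub hcard
      have hsupS : S.sup id = (Finset.range k).sup f' := by
        rw [hS, Finset.sup_image]; rfl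
      rw [hsupS, ← hfk] at hkey'
      have hstep : ((Finset.range (k + 1)).sup f').card =
          (f' k \ (Finset.range k).sup f').card + ((Finset.range k).sup f').card := by
        rw [Finset.range_add_one, Finset.sup_insert, Finset.sup_eq_union,
          Finset.card_sdiff_add_card]
      rw [hstep, Finset.sum_range_succ]
      have : t * (r - k) + (d + 1) ≤ (f' k \ (Finset.range k).sup f').card := by omega
      omega
  have hfinal := main (r + 1) le_rfl
  rw [hsup]
  have hsum : (∑ j ∈ Finset.range (r + 1), (t * (r - j) + (d + 1))) =
      t * (∑ j ∈ Finset.range (r + 1), (r - j)) + (d + 1) * (r + 1) := by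
    rw [Finset.sum_add_distrib, ← Finset.mul_sum]
    simp [mul_comm]
  have hgauss : (∑ j ∈ Finset.range (r + 1), (r - j)) = r * (r + 1) / 2 := by
    rw [← Finset.sum_range_reflect]
    have : ∀ j ∈ Finset.range (r + 1), r - (r + 1 - 1 - j) = j := by
      intro j hj; rw [Finset.mem_range] at hj; omega
    rw [Finset.sum_congr rfl this, Finset.sum_range_id, Nat.add_sub_cancel, Nat.mul_comm]
  have heven : 2 ∣ r * (r + 1) := (Nat.even_mul_succ_self r).two_dvd
  obtain ⟨m, hm⟩ := heven
  have : t * r * (r + 1) / 2 = t * m := by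
    rw [mul_assoc, hm, show t * (2 * m) = 2 * (t * m) by ring,
      Nat.mul_div_cancel_left _ (by norm_num)]
  rw [this]
  have : (∑ j ∈ Finset.range (r + 1), (t * (r - j) + (d + 1))) = t * m + (d + 1) * (r + 1) := by
    rw [hsum, hgauss, hm, Nat.mul_div_cancel_left m (by norm_num)]
  omega
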